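/- Let G be a Gibonacci sequence and let p ≥ 2 and m ≥ p + 1 be natural numbers. Then Σ_{k=2p}^{m} ( G_1 · C(k−p−2, p−1) + G_0 · C(k−p−2, p−2) ) · G_{m−k} + Σ_{t=0}^{p−1} ( G_1^2 · C(m−t−2, t) + 2 · G_0 · G_1 · C(m−t−2, t−1) + G_0^2 · C(m−t−2, t−2) ) = G_1 · G_{m−1} + G_0 · G_{m−2}. -/
import Mathlib


/-- Binomial coefficient `C a b` with an integer lower index, with the
convention that it vanishes for negative lower index. -/
def C (a : ℕ) (b : ℤ) : ℤ := if 0 ≤ b then (a.choose b.toNat : ℤ) else 0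


lemma C_natCast (a t : ℕ) : C a (t : ℤ) = (a.choose t : ℤ) := by
  simp [C]

lemma C_neg (a : ℕ) {b : ℤ} (h : b < 0) : C a b = 0 := by
  simp [C, not_le.mpr h]

lemma C_lt (a : ℕ) {b : ℤ} (h : (a : ℤ) < b) : C a b = 0 := by
  rcases lt_or_ge b 0 with h' | h'
  · exact C_neg a h'
  · lift b to ℕ using h'
    rw [C_natCast, Nat.choose_eq_zero_of_lt (by exact_mod_cast h)]
    simp

lemma C_pascal (a : ℕ) (b : ℤ) : C (a + 1) b = C a b + C a (b - 1) := by
  rcases lt_trichotomy b 0 with h | h | h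
  · rw [C_neg _ h, C_neg _ h, C_neg _ (by omega)]; ring
  · subst h; norm_num [C]
  · lift b to ℕ using h.le
    obtain ⟨c, rfl⟩ : ∃ c, b = c + 1 := ⟨b - 1, by omega⟩
    have e1 : ((c + 1 : ℕ) : ℤ) - 1 = ((c : ℕ) : ℤ) := by push_cast; ring
    rw [e1, C_natCast, C_natCast, C_natCast, Nat.choose_succ_succ]
    push_cast; ring

lemma fibsum_nat : ∀ n, (∑ t ∈ Finset.range n, (n - 1 - t).choose t) = Nat.fib n := by
  intro n
  induction n using Nat.twoStepInduction with
  | zero => simp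
  | one => simp
  | more n ih1 ih2 =>
    rw [Finset.sum_range_succ]
    have h0 : (n + 2 - 1 - (n+1)).choose (n+1) = 0 := by
      apply Nat.choose_eq_zero_of_lt; omega
    rw [h0, Finset.sum_range_succ']
    have hterm : ∀ i ∈ Finset.range n, (n + 2 - 1 - (i+1)).choose (i+1)
        = (n - 1 - i).choose i + (n - 1 - i).choose (i+1) := by
      intro i hi
      simp only [Finset.mem_range] at hi
      rw [show n + 2 - 1 - (i+1) = (n - 1 - i) + 1 by omega, Nat.choose_succ_succ]
    rw [Finset.sum_congr rfl hterm, Finset.sum_add_distrib]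
    have h2 : (∑ i ∈ Finset.range n, (n - 1 - i).choose (i+1)) + (n + 2 - 1 - 0).choose 0
        = Nat.fib (n+1) := by
      rw [← ih2, Finset.sum_range_succ']
      congr 1
      · apply Finset.sum_congr rfl
        intro i hi
        congr 1
        omega
      · simp
    rw [Nat.fib_add_two]
    omega

lemma fibsum_flex {q n : ℕ} (h1 : q ≤ n) (h2 : n ≤ 2 * q) :
    (∑ t ∈ Finset.range q, (n - 1 - t).choose t) = Nat.fib n := by
  rw [← fibsum_nat n]
  apply Finset.sum_subset
  · exact Finset.range_subset_range.mpr h1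
  · intro t ht hnt
    simp only [Finset.mem_range, not_lt] at ht hnt
    apply Nat.choose_eq_zero_of_lt
    omega

lemma gfib (G : ℕ → ℤ) (hG : ∀ n, G (n + 2) = G (n + 1) + G n) :
    ∀ n, G (n + 1) = G 1 * Nat.fib (n + 1) + G 0 * Nat.fib n := by
  intro n
  induction n using Nat.twoStepInduction with
  | zero => simp
  | one => rw [hG 0]; simp [Nat.fib_add_two]
  | more n ih1 ih2 =>
    simp only [show ∀ a : ℕ, a + 1 + 1 = a + 2 from fun a => rfl] at *
    have e3 : (Nat.fib (n + 3) : ℤ) = Nat.fib (n + 2) + Nat.fib (n + 1) := by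
      rw [show n + 3 = (n + 1) + 2 by omega, Nat.fib_add_two]; push_cast; ring
    have e2 : (Nat.fib (n + 2) : ℤ) = Nat.fib (n + 1) + Nat.fib n := by
      rw [Nat.fib_add_two]; push_cast; ring
    rw [show n + 2 + 1 = n + 3 by omega, show n + 3 = (n + 1) + 2 by omega, hG (n + 1),
      show (n + 1) + 2 = n + 3 by omega, ih1, ih2, e3, e2]
    ring

def A (G : ℕ → ℤ) (q i : ℕ) : ℤ :=
  if 2 * (q + 2) ≤ i then
    G 1 * C (i - (q + 2) - 2) (((q + 2 : ℕ) : ℤ) - 1) +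
      G 0 * C (i - (q + 2) - 2) (((q + 2 : ℕ) : ℤ) - 2)
  else 0

def B (G : ℕ → ℤ) (m t : ℕ) : ℤ :=
  G 1 ^ 2 * C (m - t - 2) (t : ℤ) + 2 * G 0 * G 1 * C (m - t - 2) ((t : ℤ) - 1) +
    G 0 ^ 2 * C (m - t - 2) ((t : ℤ) - 2)

lemma A_eval (G : ℕ → ℤ) (q i : ℕ) (h : q + 4 ≤ i) :
    A G q i = G 1 * C (i - q - 4) ((q : ℤ) + 1) + G 0 * C (i - q - 4) (q : ℤ) := by
  have hc1 : ((q + 2 : ℕ) : ℤ) - 1 = (q : ℤ) + 1 := by push_cast; ring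
  have hc2 : ((q + 2 : ℕ) : ℤ) - 2 = (q : ℤ) := by push_cast; ring
  have hn : i - (q + 2) - 2 = i - q - 4 := by omega
  unfold A
  rw [hc1, hc2, hn]
  split_ifs with h'
  · rfl
  · have hlt : ((i - q - 4 : ℕ) : ℤ) < (q : ℤ) := by
      exact_mod_cast (by omega : i - q - 4 < q)
    rw [C_lt _ (hlt.trans (by linarith)), C_lt _ hlt]
    ring

-- step case helper for S1
lemma step_S1 (G : ℕ → ℤ) (hG : ∀ n, G (n + 2) = G (n + 1) + G n) (q k : ℕ) :
    (∑ i ∈ Finset.range (k + 4), A G q i * G (k + 3 - i)) =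
      (∑ i ∈ Finset.range (k + 3), A G q i * G (k + 2 - i)) +
        (∑ i ∈ Finset.range (k + 2), A G q i * G (k + 1 - i)) +
        (A G q (k + 2) * (G 1 - G 0) + A G q (k + 3) * G 0) := by
  rw [Finset.sum_range_succ, Finset.sum_range_succ,
    Finset.sum_range_succ (n := k + 2) (f := fun i => A G q i * G (k + 2 - i))]
  have h1 : k + 3 - (k + 2) = 1 := by omega
  have h2 : k + 3 - (k + 3) = 0 := by omega
  have h3 : k + 2 - (k + 2) = 0 := by omega
  rw [h1, h2, h3]
  have hsplit : (∑ i ∈ Finset.range (k + 2), A G q i * G (k + 3 - i)) =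
      (∑ i ∈ Finset.range (k + 2), A G q i * G (k + 2 - i)) +
        (∑ i ∈ Finset.range (k + 2), A G q i * G (k + 1 - i)) := by
    rw [← Finset.sum_add_distrib]
    apply Finset.sum_congr rfl
    intro i hi
    simp only [Finset.mem_range] at hi
    have : G (k + 3 - i) = G (k + 2 - i) + G (k + 1 - i) := by
      have := hG (k + 1 - i)
      rw [show k + 1 - i + 2 = k + 3 - i by omega, show k + 1 - i + 1 = k + 2 - i by omega] at this
      exact this
    rw [this]; ring
  rw [hsplit]; ring

lemma C_m1 (a : ℕ) : C a (-1) = 0 := C_neg a (by norm_num)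
lemma C_m2 (a : ℕ) : C a (-2) = 0 := C_neg a (by norm_num)
lemma C_m3 (a : ℕ) : C a (-3) = 0 := C_neg a (by norm_num)

lemma step_S2 (G : ℕ → ℤ) (q k : ℕ) (hk : q + 2 ≤ k) :
    (∑ t ∈ Finset.range (q + 2), B G (k + 3) t) =
      (∑ t ∈ Finset.range (q + 2), B G (k + 2) t) +
        (∑ t ∈ Finset.range (q + 2), B G (k + 1) t) -
        (G 1 ^ 2 * C (k - q - 2) ((q : ℤ) + 1) + 2 * G 0 * G 1 * C (k - q - 2) (q : ℤ) +
          G 0 ^ 2 * C (k - q - 2) ((q : ℤ) - 1)) := by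
  have key1 : ∀ t ∈ Finset.range (q + 2), B G (k + 3) t = B G (k + 2) t +
      (G 1 ^ 2 * C (k - t) ((t : ℤ) - 1) + 2 * G 0 * G 1 * C (k - t) ((t : ℤ) - 2) +
        G 0 ^ 2 * C (k - t) ((t : ℤ) - 3)) := by
    intro t ht
    simp only [Finset.mem_range] at ht
    unfold B
    rw [show k + 3 - t - 2 = (k - t) + 1 by omega, show k + 2 - t - 2 = k - t by omega,
      C_pascal, C_pascal, C_pascal,
      show (t : ℤ) - 1 - 1 = (t : ℤ) - 2 by ring, show (t : ℤ) - 2 - 1 = (t : ℤ) - 3 by ring]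
    ring
  rw [Finset.sum_congr rfl key1, Finset.sum_add_distrib]
  have key2 : (∑ t ∈ Finset.range (q + 2),
      (G 1 ^ 2 * C (k - t) ((t : ℤ) - 1) + 2 * G 0 * G 1 * C (k - t) ((t : ℤ) - 2) +
        G 0 ^ 2 * C (k - t) ((t : ℤ) - 3)))
      = (∑ t ∈ Finset.range (q + 2), B G (k + 1) t) - B G (k + 1) (q + 1) := by
    rw [Finset.sum_range_succ']
    have hs : ∀ s ∈ Finset.range (q + 1),
        (G 1 ^ 2 * C (k - (s + 1)) (((s + 1 : ℕ) : ℤ) - 1) +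
          2 * G 0 * G 1 * C (k - (s + 1)) (((s + 1 : ℕ) : ℤ) - 2) +
          G 0 ^ 2 * C (k - (s + 1)) (((s + 1 : ℕ) : ℤ) - 3)) = B G (k + 1) s := by
      intro s hs
      simp only [Finset.mem_range] at hs
      unfold B
      rw [show k + 1 - s - 2 = k - (s + 1) by omega,
        show ((s + 1 : ℕ) : ℤ) - 1 = (s : ℤ) by push_cast; ring,
        show ((s + 1 : ℕ) : ℤ) - 2 = (s : ℤ) - 1 by push_cast; ring,
        show ((s + 1 : ℕ) : ℤ) - 3 = (s : ℤ) - 2 by push_cast; ring]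
    rw [Finset.sum_congr rfl hs, Finset.sum_range_succ (f := B G (k + 1))]
    norm_num [C_m1, C_m2, C_m3]
    rw [Finset.sum_range_succ, Finset.sum_range_succ]
    ring
  rw [key2]
  have hB : B G (k + 1) (q + 1) = G 1 ^ 2 * C (k - q - 2) ((q : ℤ) + 1) +
      2 * G 0 * G 1 * C (k - q - 2) (q : ℤ) + G 0 ^ 2 * C (k - q - 2) ((q : ℤ) - 1) := by
    unfold B
    rw [show k + 1 - (q + 1) - 2 = k - q - 2 by omega,
      show ((q + 1 : ℕ) : ℤ) = (q : ℤ) + 1 by push_cast; ring,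
      show (q : ℤ) + 1 - 1 = (q : ℤ) by ring, show (q : ℤ) + 1 - 2 = (q : ℤ) - 1 by ring]
  rw [hB]
  ring

lemma step_rest (G : ℕ → ℤ) (q k : ℕ) (hk : q + 2 ≤ k) :
    A G q (k + 2) * (G 1 - G 0) + A G q (k + 3) * G 0 =
      G 1 ^ 2 * C (k - q - 2) ((q : ℤ) + 1) + 2 * G 0 * G 1 * C (k - q - 2) (q : ℤ) +
        G 0 ^ 2 * C (k - q - 2) ((q : ℤ) - 1) := by
  rw [A_eval G q (k + 2) (by omega), A_eval G q (k + 3) (by omega),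
    show k + 2 - q - 4 = k - q - 2 by omega, show k + 3 - q - 4 = (k - q - 2) + 1 by omega,
    C_pascal, C_pascal, show (q : ℤ) + 1 - 1 = (q : ℤ) by ring]
  ring

lemma base1 (G : ℕ → ℤ) (hG : ∀ n, G (n + 2) = G (n + 1) + G n) (q : ℕ) :
    (∑ i ∈ Finset.range (q + 4), A G q i * G (q + 3 - i)) +
      (∑ t ∈ Finset.range (q + 2), B G (q + 3) t) = G 1 * G (q + 2) + G 0 * G (q + 1) := by
  have hA : (∑ i ∈ Finset.range (q + 4), A G q i * G (q + 3 - i)) = 0 := by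
    apply Finset.sum_eq_zero
    intro i hi
    simp only [Finset.mem_range] at hi
    rw [show A G q i = 0 from by unfold A; rw [if_neg (by omega)]]
    ring
  rw [hA, zero_add]
  simp only [B]
  rw [Finset.sum_add_distrib, Finset.sum_add_distrib]
  have e1 : (∑ t ∈ Finset.range (q + 2), G 1 ^ 2 * C (q + 3 - t - 2) (t : ℤ)) =
      G 1 ^ 2 * (Nat.fib (q + 2) : ℤ) := by
    rw [← Finset.mul_sum]
    congr 1
    have h : ∀ t ∈ Finset.range (q + 2), C (q + 3 - t - 2) (t : ℤ) =
        ((q + 2 - 1 - t).choose t : ℤ) := by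
      intro t ht
      rw [show q + 3 - t - 2 = q + 2 - 1 - t by omega, C_natCast]
    rw [Finset.sum_congr rfl h, ← Nat.cast_sum, fibsum_nat]
  have e2 : (∑ t ∈ Finset.range (q + 2), 2 * G 0 * G 1 * C (q + 3 - t - 2) ((t : ℤ) - 1)) =
      2 * G 0 * G 1 * (Nat.fib (q + 1) : ℤ) := by
    rw [Finset.sum_range_succ']
    have h : ∀ s ∈ Finset.range (q + 1),
        2 * G 0 * G 1 * C (q + 3 - (s + 1) - 2) (((s + 1 : ℕ) : ℤ) - 1) =
          2 * G 0 * G 1 * ((q + 1 - 1 - s).choose s : ℤ) := by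
      intro s hs
      rw [show ((s + 1 : ℕ) : ℤ) - 1 = (s : ℤ) by push_cast; ring,
        show q + 3 - (s + 1) - 2 = q + 1 - 1 - s by omega, C_natCast]
    rw [Finset.sum_congr rfl h, ← Finset.mul_sum, ← Nat.cast_sum, fibsum_nat]
    norm_num [C_m1]
  have e3 : (∑ t ∈ Finset.range (q + 2), G 0 ^ 2 * C (q + 3 - t - 2) ((t : ℤ) - 2)) =
      G 0 ^ 2 * (Nat.fib q : ℤ) := by
    rw [Finset.sum_range_succ', Finset.sum_range_succ']
    have h : ∀ s ∈ Finset.range q,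
        G 0 ^ 2 * C (q + 3 - (s + 1 + 1) - 2) (((s + 1 + 1 : ℕ) : ℤ) - 2) =
          G 0 ^ 2 * ((q - 1 - s).choose s : ℤ) := by
      intro s hs
      rw [show ((s + 1 + 1 : ℕ) : ℤ) - 2 = (s : ℤ) by push_cast; ring,
        show q + 3 - (s + 1 + 1) - 2 = q - 1 - s by omega, C_natCast]
    rw [Finset.sum_congr rfl h, ← Finset.mul_sum, ← Nat.cast_sum, fibsum_nat]
    norm_num [C_m1, C_m2]
  rw [e1, e2, e3]
  have g2 := gfib G hG (q + 1)
  rw [show q + 1 + 1 = q + 2 by omega] at g2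
  rw [g2, gfib G hG q]
  ring

lemma base2 (G : ℕ → ℤ) (hG : ∀ n, G (n + 2) = G (n + 1) + G n) (q : ℕ) (hq : 1 ≤ q) :
    (∑ i ∈ Finset.range (q + 5), A G q i * G (q + 4 - i)) +
      (∑ t ∈ Finset.range (q + 2), B G (q + 4) t) = G 1 * G (q + 3) + G 0 * G (q + 2) := by
  have hA : (∑ i ∈ Finset.range (q + 5), A G q i * G (q + 4 - i)) = 0 := by
    apply Finset.sum_eq_zero
    intro i hi
    simp only [Finset.mem_range] at hi
    rw [show A G q i = 0 from by unfold A; rw [if_neg (by omega)]]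
    ring
  rw [hA, zero_add]
  simp only [B]
  rw [Finset.sum_add_distrib, Finset.sum_add_distrib]
  have e1 : (∑ t ∈ Finset.range (q + 2), G 1 ^ 2 * C (q + 4 - t - 2) (t : ℤ)) =
      G 1 ^ 2 * (Nat.fib (q + 3) : ℤ) := by
    rw [← Finset.mul_sum]
    congr 1
    have h : ∀ t ∈ Finset.range (q + 2), C (q + 4 - t - 2) (t : ℤ) =
        ((q + 3 - 1 - t).choose t : ℤ) := by
      intro t ht
      rw [show q + 4 - t - 2 = q + 3 - 1 - t by omega, C_natCast]
    rw [Finset.sum_congr rfl h, ← Nat.cast_sum, fibsum_flex (by omega) (by omega)]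
  have e2 : (∑ t ∈ Finset.range (q + 2), 2 * G 0 * G 1 * C (q + 4 - t - 2) ((t : ℤ) - 1)) =
      2 * G 0 * G 1 * (Nat.fib (q + 2) : ℤ) := by
    rw [Finset.sum_range_succ']
    have h : ∀ s ∈ Finset.range (q + 1),
        2 * G 0 * G 1 * C (q + 4 - (s + 1) - 2) (((s + 1 : ℕ) : ℤ) - 1) =
          2 * G 0 * G 1 * ((q + 2 - 1 - s).choose s : ℤ) := by
      intro s hs
      rw [show ((s + 1 : ℕ) : ℤ) - 1 = (s : ℤ) by push_cast; ring,
        show q + 4 - (s + 1) - 2 = q + 2 - 1 - s by omega, C_natCast]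
    rw [Finset.sum_congr rfl h, ← Finset.mul_sum, ← Nat.cast_sum,
      fibsum_flex (by omega) (by omega)]
    norm_num [C_m1]
  have e3 : (∑ t ∈ Finset.range (q + 2), G 0 ^ 2 * C (q + 4 - t - 2) ((t : ℤ) - 2)) =
      G 0 ^ 2 * (Nat.fib (q + 1) : ℤ) := by
    rw [Finset.sum_range_succ', Finset.sum_range_succ']
    have h : ∀ s ∈ Finset.range q,
        G 0 ^ 2 * C (q + 4 - (s + 1 + 1) - 2) (((s + 1 + 1 : ℕ) : ℤ) - 2) =
          G 0 ^ 2 * ((q + 1 - 1 - s).choose s : ℤ) := by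
      intro s hs
      rw [show ((s + 1 + 1 : ℕ) : ℤ) - 2 = (s : ℤ) by push_cast; ring,
        show q + 4 - (s + 1 + 1) - 2 = q + 1 - 1 - s by omega, C_natCast]
    rw [Finset.sum_congr rfl h, ← Finset.mul_sum, ← Nat.cast_sum,
      fibsum_flex (by omega) (by omega)]
    norm_num [C_m1, C_m2]
  rw [e1, e2, e3]
  have g3 := gfib G hG (q + 2)
  rw [show q + 2 + 1 = q + 3 by omega] at g3
  have g2 := gfib G hG (q + 1)
  rw [show q + 1 + 1 = q + 2 by omega] at g2
  rw [g3, g2]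
  ring

lemma base2zero (G : ℕ → ℤ) (hG : ∀ n, G (n + 2) = G (n + 1) + G n) :
    (∑ i ∈ Finset.range 5, A G 0 i * G (4 - i)) +
      (∑ t ∈ Finset.range 2, B G 4 t) = G 1 * G 3 + G 0 * G 2 := by
  have h2 := hG 0
  have h3 := hG 1
  norm_num at h2 h3
  norm_num [Finset.sum_range_succ, A, B, C]
  linear_combination -G 1 * h3 - G 1 * h2 - G 0 * h2

lemma key (G : ℕ → ℤ) (hG : ∀ n, G (n + 2) = G (n + 1) + G n) (q : ℕ) :
    ∀ m, q + 3 ≤ m →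
      (∑ i ∈ Finset.range (m + 1), A G q i * G (m - i)) +
        (∑ t ∈ Finset.range (q + 2), B G m t) = G 1 * G (m - 1) + G 0 * G (m - 2) := by
  intro m
  induction m using Nat.strong_induction_on with
  | _ m IH =>
  intro hm
  rcases Nat.lt_or_ge m (q + 5) with h | h
  · rcases (by omega : m = q + 3 ∨ m = q + 4) with rfl | rfl
    · rw [show q + 3 + 1 = q + 4 by omega, show q + 3 - 1 = q + 2 by omega,
        show q + 3 - 2 = q + 1 by omega]
      exact base1 G hG q
    · rcases Nat.eq_zero_or_pos q with rfl | hq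
      · rw [show 0 + 4 + 1 = 5 by omega, show 0 + 4 - 1 = 3 by omega,
          show 0 + 4 - 2 = 2 by omega, show 0 + 4 = 4 by omega, show 0 + 2 = 2 by omega]
        exact base2zero G hG
      · rw [show q + 4 + 1 = q + 5 by omega, show q + 4 - 1 = q + 3 by omega,
          show q + 4 - 2 = q + 2 by omega]
        exact base2 G hG q hq
  · obtain ⟨k, hk, rfl⟩ : ∃ k, q + 2 ≤ k ∧ m = k + 3 := ⟨m - 3, by omega, by omega⟩
    have IH1 := IH (k + 2) (by omega) (by omega)
    have IH2 := IH (k + 1) (by omega) (by omega)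
    rw [show k + 2 + 1 = k + 3 by omega, show k + 2 - 1 = k + 1 by omega,
      show k + 2 - 2 = k by omega] at IH1
    rw [show k + 1 + 1 = k + 2 by omega, show k + 1 - 1 = k by omega,
      show k + 1 - 2 = k - 1 by omega] at IH2
    rw [show k + 3 + 1 = k + 4 by omega, show k + 3 - 1 = k + 2 by omega,
      show k + 3 - 2 = k + 1 by omega]
    rw [step_S1 G hG q k, step_S2 G q k hk]
    have hrest := step_rest G q k hk
    have hGk2 : G (k + 2) = G (k + 1) + G k := hG k
    have hGk1 : G (k + 1) = G k + G (k - 1) := by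
      have := hG (k - 1)
      rw [show k - 1 + 2 = k + 1 by omega, show k - 1 + 1 = k by omega] at this
      exact this
    linear_combination IH1 + IH2 + hrest - G 1 * hGk2 - G 0 * hGk1


theorem gibonacci_pth_horizontal (G : ℕ → ℤ)
    (hG : ∀ n, G (n + 2) = G (n + 1) + G n)
    (p m : ℕ) (hp : 2 ≤ p) (hm : p + 1 ≤ m) :
    (∑ k ∈ Finset.Icc (2 * p) m,
        (G 1 * C (k - p - 2) ((p : ℤ) - 1) + G 0 * C (k - p - 2) ((p : ℤ) - 2)) *
          G (m - k)) +
      (∑ t ∈ Finset.range p,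
        (G 1 ^ 2 * C (m - t - 2) (t : ℤ) + 2 * G 0 * G 1 * C (m - t - 2) ((t : ℤ) - 1) +
          G 0 ^ 2 * C (m - t - 2) ((t : ℤ) - 2))) =
    G 1 * G (m - 1) + G 0 * G (m - 2) := by
  obtain ⟨q, rfl⟩ : ∃ q, p = q + 2 := ⟨p - 2, by omega⟩
  have hIcc : (∑ k ∈ Finset.Icc (2 * (q + 2)) m,
      (G 1 * C (k - (q + 2) - 2) (((q + 2 : ℕ) : ℤ) - 1) +
        G 0 * C (k - (q + 2) - 2) (((q + 2 : ℕ) : ℤ) - 2)) * G (m - k)) =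
      ∑ i ∈ Finset.range (m + 1), A G q i * G (m - i) := by
    rw [show Finset.Icc (2 * (q + 2)) m =
        (Finset.range (m + 1)).filter (fun i => 2 * (q + 2) ≤ i) from by
      ext x
      simp only [Finset.mem_Icc, Finset.mem_filter, Finset.mem_range, Nat.lt_succ_iff]
      omega, Finset.sum_filter]
    apply Finset.sum_congr rfl
    intro i hi
    unfold A
    rw [ite_mul, zero_mul]
  rw [hIcc]
  have hkey := key G hG q m (by omega)
  simp only [B] at hkey
  exact hkey
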